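/- arXiv:math/9709203 — 2 statements merged into one kernel-verified Lean document; each statement's English description precedes it below -/
import Mathlib

section
/- If D-almost every X_i is a linearly ordered topological space (LOTS) with inducing linear order ≤_i, then the ultraproduct order ∏_D ≤_i is a linear order on ∏_D X_i that induces the ultraproduct topology; in particular, ultraproducts of LOTS are LOTS. -/
open Filter Topology Set

universe u v

def USetoid {I : Type u} (D : Ultrafilter I) (X : I → Type v) : Setoid (∀ i, X i) where
  r x y := ∀ᶠ i in (D : Filter I), x i = y i
  iseqv := ⟨fun _ => Filter.Eventually.of_forall fun _ => rfl,
    fun h => h.mono fun _ e => e.symm,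
    fun h₁ h₂ => (h₁.and h₂).mono fun _ e => e.1.trans e.2⟩

def Uprod {I : Type u} (D : Ultrafilter I) (X : I → Type v) := Quotient (USetoid D X)

def ultrabox {I : Type u} (D : Ultrafilter I) (X : I → Type v) (U : ∀ i, Set (X i)) :
    Set (Uprod D X) :=
  {q | ∃ x : ∀ i, X i, Quotient.mk (USetoid D X) x = q ∧ {i | x i ∈ U i} ∈ D}

def uTop {I : Type u} (D : Ultrafilter I) (X : I → Type v) [∀ i, TopologicalSpace (X i)] :
    TopologicalSpace (Uprod D X) :=
  TopologicalSpace.generateFrom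
    {s | ∃ U : ∀ i, Set (X i), (∀ i, IsOpen (U i)) ∧ s = ultrabox D X U}

/-- The topology generated by the open rays (hence by the open intervals, which
are their finite intersections) of a relation `le`, intended as a linear
order. -/
def rayTop {α : Type v} (le : α → α → Prop) : TopologicalSpace α :=
  TopologicalSpace.generateFrom
    ({s | ∃ a, s = {x | le x a ∧ x ≠ a}} ∪ {s | ∃ a, s = {x | le a x ∧ x ≠ a}})

/-- The ultraproduct order: `x/D ≤ y/D` iff `{i | x i ≤_i y i} ∈ D`. -/
def urel {I : Type u} (D : Ultrafilter I) (X : I → Type v)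
    (le : ∀ i, X i → X i → Prop) : Uprod D X → Uprod D X → Prop :=
  fun q r => ∃ x y : ∀ i, X i, Quotient.mk (USetoid D X) x = q ∧
    Quotient.mk (USetoid D X) y = r ∧ {i | le i (x i) (y i)} ∈ D

section Helpers
variable {I : Type u} {X : I → Type v}

theorem mk_eq_mk (D : Ultrafilter I) (x y : ∀ i, X i) :
    Quotient.mk (USetoid D X) x = Quotient.mk (USetoid D X) y ↔ {i | x i = y i} ∈ D :=
  ⟨fun h => Quotient.exact h, fun h => Quotient.sound h⟩

theorem mem_ultrabox (D : Ultrafilter I) (U : ∀ i, Set (X i)) (x : ∀ i, X i) :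
    Quotient.mk (USetoid D X) x ∈ ultrabox D X U ↔ {i | x i ∈ U i} ∈ D := by
  constructor
  · rintro ⟨x', hx, hm⟩
    have h1 : {i | x' i = x i} ∈ D := (mk_eq_mk D x' x).1 hx
    exact mem_of_superset (inter_mem h1 hm) fun i hi => show x i ∈ U i from hi.1 ▸ hi.2
  · intro hm
    exact ⟨x, rfl, hm⟩

theorem urel_mk (D : Ultrafilter I) (le : ∀ i, X i → X i → Prop) (x y : ∀ i, X i) :
    urel D X le (Quotient.mk (USetoid D X) x) (Quotient.mk (USetoid D X) y) ↔
      {i | le i (x i) (y i)} ∈ D := by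
  constructor
  · rintro ⟨x', y', hx, hy, hm⟩
    have h1 : {i | x' i = x i} ∈ D := (mk_eq_mk D x' x).1 hx
    have h2 : {i | y' i = y i} ∈ D := (mk_eq_mk D y' y).1 hy
    exact mem_of_superset (inter_mem (inter_mem h1 h2) hm)
      fun i hi => show le i (x i) (y i) from hi.1.1 ▸ hi.1.2 ▸ hi.2
  · intro hm
    exact ⟨x, y, rfl, rfl, hm⟩

end Helpers

def Jset {α : Type v} (le' : α → α → Prop) (p r : Bool) (a b : α) : Set α :=
  {y | (p = true → le' a y ∧ y ≠ a) ∧ (r = true → le' y b ∧ y ≠ b)}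

theorem mem_Jset {α : Type v} {le' : α → α → Prop} {p r : Bool} {a b y : α} :
    y ∈ Jset le' p r a b ↔
      (p = true → le' a y ∧ y ≠ a) ∧ (r = true → le' y b ∧ y ≠ b) := Iff.rfl

theorem comb_lower {α : Type v} {le' : α → α → Prop} (hlin : IsLinearOrder α le')
    {p₁ p₂ : Bool} {a₁ a₂ x : α}
    (h₁ : p₁ = true → le' a₁ x ∧ x ≠ a₁) (h₂ : p₂ = true → le' a₂ x ∧ x ≠ a₂) :
    ∃ p a, (p = true → le' a x ∧ x ≠ a) ∧
      ∀ y, (p = true → le' a y ∧ y ≠ a) →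
        (p₁ = true → le' a₁ y ∧ y ≠ a₁) ∧ (p₂ = true → le' a₂ y ∧ y ≠ a₂) := by
  haveI := hlin
  match p₁, p₂ with
  | false, false =>
    exact ⟨false, a₁, ⟨fun h => absurd h Bool.false_ne_true, fun y _ => ⟨fun h => absurd h Bool.false_ne_true, fun h => absurd h Bool.false_ne_true⟩⟩⟩
  | false, true =>
    exact ⟨true, a₂, ⟨h₂, fun y hy => ⟨fun h => absurd h Bool.false_ne_true, hy⟩⟩⟩
  | true, false =>
    exact ⟨true, a₁, ⟨h₁, fun y hy => ⟨hy, fun h => absurd h Bool.false_ne_true⟩⟩⟩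
  | true, true =>
    rcases total_of le' a₁ a₂ with hle | hle
    · refine ⟨true, a₂, ⟨h₂, fun y hy => ⟨fun _ => ?_, hy⟩⟩⟩
      obtain ⟨hy1, hy2⟩ := hy rfl
      refine ⟨Trans.trans hle hy1, fun hya => hy2 ?_⟩
      rw [hya] at hy1
      rw [hya, antisymm_of (r := le') hle hy1]
    · refine ⟨true, a₁, ⟨h₁, fun y hy => ⟨hy, fun _ => ?_⟩⟩⟩
      obtain ⟨hy1, hy2⟩ := hy rfl
      refine ⟨Trans.trans hle hy1, fun hya => hy2 ?_⟩
      rw [hya] at hy1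
      rw [hya, antisymm_of (r := le') hle hy1]

theorem comb_upper {α : Type v} {le' : α → α → Prop} (hlin : IsLinearOrder α le')
    {r₁ r₂ : Bool} {b₁ b₂ x : α}
    (h₁ : r₁ = true → le' x b₁ ∧ x ≠ b₁) (h₂ : r₂ = true → le' x b₂ ∧ x ≠ b₂) :
    ∃ r b, (r = true → le' x b ∧ x ≠ b) ∧
      ∀ y, (r = true → le' y b ∧ y ≠ b) →
        (r₁ = true → le' y b₁ ∧ y ≠ b₁) ∧ (r₂ = true → le' y b₂ ∧ y ≠ b₂) := by
  haveI := hlin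
  match r₁, r₂ with
  | false, false =>
    exact ⟨false, b₁, ⟨fun h => absurd h Bool.false_ne_true, fun y _ => ⟨fun h => absurd h Bool.false_ne_true, fun h => absurd h Bool.false_ne_true⟩⟩⟩
  | false, true =>
    exact ⟨true, b₂, ⟨h₂, fun y hy => ⟨fun h => absurd h Bool.false_ne_true, hy⟩⟩⟩
  | true, false =>
    exact ⟨true, b₁, ⟨h₁, fun y hy => ⟨hy, fun h => absurd h Bool.false_ne_true⟩⟩⟩
  | true, true =>
    rcases total_of le' b₁ b₂ with hle | hle
    · refine ⟨true, b₁, ⟨h₁, fun y hy => ⟨hy, fun _ => ?_⟩⟩⟩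
      obtain ⟨hy1, hy2⟩ := hy rfl
      refine ⟨Trans.trans hy1 hle, fun hyb => hy2 ?_⟩
      rw [hyb] at hy1
      rw [hyb, antisymm_of (r := le') hy1 hle]
    · refine ⟨true, b₂, ⟨h₂, fun y hy => ⟨fun _ => ?_, hy⟩⟩⟩
      obtain ⟨hy1, hy2⟩ := hy rfl
      refine ⟨Trans.trans hy1 hle, fun hyb => hy2 ?_⟩
      rw [hyb] at hy1
      rw [hyb, antisymm_of (r := le') hy1 hle]

theorem exists_J {α : Type v} {le' : α → α → Prop} (hlin : IsLinearOrder α le')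
    {U : Set α}
    (hU : TopologicalSpace.GenerateOpen
      ({s | ∃ a, s = {x | le' x a ∧ x ≠ a}} ∪ {s | ∃ a, s = {x | le' a x ∧ x ≠ a}}) U) :
    ∀ x ∈ U, ∃ p r a b, x ∈ Jset le' p r a b ∧ Jset le' p r a b ⊆ U := by
  induction hU with
  | basic s hs =>
    intro x hx
    rcases hs with ⟨a, rfl⟩ | ⟨a, rfl⟩
    · refine ⟨false, true, x, a, mem_Jset.2 ⟨fun h => absurd h Bool.false_ne_true, fun _ => hx⟩,
        fun y hy => (mem_Jset.1 hy).2 rfl⟩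
    · refine ⟨true, false, a, x, mem_Jset.2 ⟨fun _ => hx, fun h => absurd h Bool.false_ne_true⟩,
        fun y hy => (mem_Jset.1 hy).1 rfl⟩
  | univ =>
    intro x _
    exact ⟨false, false, x, x, mem_Jset.2 ⟨fun h => absurd h Bool.false_ne_true, fun h => absurd h Bool.false_ne_true⟩,
      fun y _ => trivial⟩
  | inter s t _ _ ihs iht =>
    intro x hx
    obtain ⟨p₁, r₁, a₁, b₁, hx₁, hs₁⟩ := ihs x hx.1
    obtain ⟨p₂, r₂, a₂, b₂, hx₂, hs₂⟩ := iht x hx.2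
    obtain ⟨p, a, hxl, hl⟩ := comb_lower hlin (mem_Jset.1 hx₁).1 (mem_Jset.1 hx₂).1
    obtain ⟨r, b, hxu, hu⟩ := comb_upper hlin (mem_Jset.1 hx₁).2 (mem_Jset.1 hx₂).2
    refine ⟨p, r, a, b, mem_Jset.2 ⟨hxl, hxu⟩, fun y hy => ?_⟩
    obtain ⟨hyl₁, hyl₂⟩ := hl y (mem_Jset.1 hy).1
    obtain ⟨hyu₁, hyu₂⟩ := hu y (mem_Jset.1 hy).2
    exact Set.mem_inter (hs₁ (mem_Jset.2 ⟨hyl₁, hyu₁⟩)) (hs₂ (mem_Jset.2 ⟨hyl₂, hyu₂⟩))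
  | sUnion S _ ih =>
    rintro x ⟨s, hsS, hxs⟩
    obtain ⟨p, r, a, b, hx, hsub⟩ := ih s hsS x hxs
    exact ⟨p, r, a, b, hx, hsub.trans (subset_sUnion_of_mem hsS)⟩

/-- If D-almost every `X i` is a LOTS with inducing linear order `≤_i`, then
the ultraproduct order is a linear order on `∏_D X i` inducing the ultraproduct
topology; in particular, ultraproducts of LOTS are LOTS. -/
theorem ultraproduct_LOTS {I : Type u} (D : Ultrafilter I) (X : I → Type u)
    [∀ i, TopologicalSpace (X i)] (le : ∀ i, X i → X i → Prop)
    (h : {i | IsLinearOrder (X i) (le i) ∧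
      (inferInstance : TopologicalSpace (X i)) = rayTop (le i)} ∈ D) :
    IsLinearOrder (Uprod D X) (urel D X le) ∧ uTop D X = rayTop (urel D X le) := by
  classical
  constructor
  · refine { refl := ?_, trans := ?_, antisymm := ?_, total := ?_ }
    · refine Quotient.ind fun x => ?_
      exact (urel_mk D le x x).2 (mem_of_superset h fun i hi => by
        haveI := hi.1; exact refl_of (le i) (x i))
    · refine Quotient.ind fun x => Quotient.ind fun y => Quotient.ind fun z => ?_
      intro hxy hyz
      rw [urel_mk] at hxy hyz ⊢
      exact mem_of_superset (inter_mem (inter_mem hxy hyz) h) fun i hi => by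
        haveI := hi.2.1; exact trans_of (le i) hi.1.1 hi.1.2
    · refine Quotient.ind fun x => Quotient.ind fun y => ?_
      intro hxy hyx
      rw [urel_mk] at hxy hyx
      exact (mk_eq_mk D x y).2 (mem_of_superset (inter_mem (inter_mem hxy hyx) h)
        fun i hi => by haveI := hi.2.1; exact antisymm_of (le i) hi.1.1 hi.1.2)
    · refine Quotient.ind fun x => Quotient.ind fun y => ?_
      rcases D.mem_or_compl_mem {i | le i (x i) (y i)} with hm | hm
      · exact Or.inl ((urel_mk D le x y).2 hm)
      · refine Or.inr ((urel_mk D le y x).2 (mem_of_superset (inter_mem hm h) ?_))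
        intro i hi
        haveI := hi.2.1
        exact (total_of (le i) (x i) (y i)).resolve_left hi.1
  · refine le_antisymm ?_ ?_
    · -- uTop ≤ rayTop : rays are open in uTop
      unfold rayTop
      refine le_generateFrom ?_
      rintro s (⟨aq, rfl⟩ | ⟨aq, rfl⟩) <;> obtain ⟨a, rfl⟩ := Quotient.exists_rep aq
      · set V : ∀ i, Set (X i) := fun i =>
          if hi : IsLinearOrder (X i) (le i) ∧
              (inferInstance : TopologicalSpace (X i)) = rayTop (le i)
          then {y | le i y (a i) ∧ y ≠ a i} else Set.univ with hV
        have hVo : ∀ i, IsOpen (V i) := by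
          intro i
          rw [hV]; dsimp only
          split_ifs with hi
          · have hinst : ‹∀ i, TopologicalSpace (X i)› i = rayTop (le i) := hi.2
            rw [hinst]
            exact TopologicalSpace.isOpen_generateFrom_of_mem (Or.inl ⟨a i, rfl⟩)
          · exact isOpen_univ
        have hset : {x | urel D X le x (Quotient.mk (USetoid D X) a) ∧
            x ≠ Quotient.mk (USetoid D X) a} = ultrabox D X V := by
          ext q
          obtain ⟨y, rfl⟩ := Quotient.exists_rep q
          refine Iff.trans ?_ (mem_ultrabox D V y).symm
          show _ ∧ _ ↔ _
          constructor
          · rintro ⟨h1, h2⟩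
            rw [urel_mk] at h1
            have h2' : {i | y i = a i}ᶜ ∈ D :=
              Ultrafilter.compl_mem_iff_notMem.2 (fun hc => h2 ((mk_eq_mk D y a).2 hc))
            refine mem_of_superset (inter_mem (inter_mem h1 h2') h) fun i hi => ?_
            have hc : IsLinearOrder (X i) (le i) ∧
                (inferInstance : TopologicalSpace (X i)) = rayTop (le i) := hi.2
            show y i ∈ V i
            rw [hV]; dsimp only; rw [dif_pos hc]
            exact ⟨hi.1.1, hi.1.2⟩
          · intro hm
            have h1 : {i | le i (y i) (a i)} ∈ D := by
              refine mem_of_superset (inter_mem hm h) fun i hi => ?_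
              have hc : IsLinearOrder (X i) (le i) ∧
                  (inferInstance : TopologicalSpace (X i)) = rayTop (le i) := hi.2
              have hy : y i ∈ V i := hi.1
              rw [hV] at hy; dsimp only at hy; rw [dif_pos hc] at hy
              exact hy.1
            have h2 : {i | y i = a i}ᶜ ∈ D := by
              refine mem_of_superset (inter_mem hm h) fun i hi => ?_
              have hc : IsLinearOrder (X i) (le i) ∧
                  (inferInstance : TopologicalSpace (X i)) = rayTop (le i) := hi.2
              have hy : y i ∈ V i := hi.1
              rw [hV] at hy; dsimp only at hy; rw [dif_pos hc] at hy
              exact hy.2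
            refine ⟨(urel_mk D le y a).2 h1, fun hc => ?_⟩
            exact Ultrafilter.compl_mem_iff_notMem.1 h2 ((mk_eq_mk D y a).1 hc)
        rw [hset]
        exact TopologicalSpace.isOpen_generateFrom_of_mem ⟨V, hVo, rfl⟩
      · set V : ∀ i, Set (X i) := fun i =>
          if hi : IsLinearOrder (X i) (le i) ∧
              (inferInstance : TopologicalSpace (X i)) = rayTop (le i)
          then {y | le i (a i) y ∧ y ≠ a i} else Set.univ with hV
        have hVo : ∀ i, IsOpen (V i) := by
          intro i
          rw [hV]; dsimp only
          split_ifs with hi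
          · have hinst : ‹∀ i, TopologicalSpace (X i)› i = rayTop (le i) := hi.2
            rw [hinst]
            exact TopologicalSpace.isOpen_generateFrom_of_mem (Or.inr ⟨a i, rfl⟩)
          · exact isOpen_univ
        have hset : {x | urel D X le (Quotient.mk (USetoid D X) a) x ∧
            x ≠ Quotient.mk (USetoid D X) a} = ultrabox D X V := by
          ext q
          obtain ⟨y, rfl⟩ := Quotient.exists_rep q
          refine Iff.trans ?_ (mem_ultrabox D V y).symm
          show _ ∧ _ ↔ _
          constructor
          · rintro ⟨h1, h2⟩
            rw [urel_mk] at h1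
            have h2' : {i | y i = a i}ᶜ ∈ D :=
              Ultrafilter.compl_mem_iff_notMem.2 (fun hc => h2 ((mk_eq_mk D y a).2 hc))
            refine mem_of_superset (inter_mem (inter_mem h1 h2') h) fun i hi => ?_
            have hc : IsLinearOrder (X i) (le i) ∧
                (inferInstance : TopologicalSpace (X i)) = rayTop (le i) := hi.2
            show y i ∈ V i
            rw [hV]; dsimp only; rw [dif_pos hc]
            exact ⟨hi.1.1, hi.1.2⟩
          · intro hm
            have h1 : {i | le i (a i) (y i)} ∈ D := by
              refine mem_of_superset (inter_mem hm h) fun i hi => ?_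
              have hc : IsLinearOrder (X i) (le i) ∧
                  (inferInstance : TopologicalSpace (X i)) = rayTop (le i) := hi.2
              have hy : y i ∈ V i := hi.1
              rw [hV] at hy; dsimp only at hy; rw [dif_pos hc] at hy
              exact hy.1
            have h2 : {i | y i = a i}ᶜ ∈ D := by
              refine mem_of_superset (inter_mem hm h) fun i hi => ?_
              have hc : IsLinearOrder (X i) (le i) ∧
                  (inferInstance : TopologicalSpace (X i)) = rayTop (le i) := hi.2
              have hy : y i ∈ V i := hi.1
              rw [hV] at hy; dsimp only at hy; rw [dif_pos hc] at hy
              exact hy.2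
            refine ⟨(urel_mk D le a y).2 h1, fun hc => ?_⟩
            exact Ultrafilter.compl_mem_iff_notMem.1 h2 ((mk_eq_mk D y a).1 hc)
        rw [hset]
        exact TopologicalSpace.isOpen_generateFrom_of_mem ⟨V, hVo, rfl⟩
    · -- rayTop ≤ uTop : boxes are open in rayTop
      unfold uTop
      refine le_generateFrom ?_
      rintro s ⟨U, hUo, rfl⟩
      letI τ := rayTop (urel D X le)
      rw [isOpen_iff_forall_mem_open]
      rintro q ⟨x, rfl, hA⟩
      have hch : ∀ i, ∃ (p r : Bool) (a b : X i),
          (x i ∈ U i ∧ (IsLinearOrder (X i) (le i) ∧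
            (inferInstance : TopologicalSpace (X i)) = rayTop (le i))) →
          x i ∈ Jset (le i) p r a b ∧ Jset (le i) p r a b ⊆ U i := by
        intro i
        by_cases hi : x i ∈ U i ∧ (IsLinearOrder (X i) (le i) ∧
            (inferInstance : TopologicalSpace (X i)) = rayTop (le i))
        · have hgen : TopologicalSpace.GenerateOpen
              ({s | ∃ a, s = {y | le i y a ∧ y ≠ a}} ∪ {s | ∃ a, s = {y | le i a y ∧ y ≠ a}})
              (U i) := by
            have hinst : ‹∀ i, TopologicalSpace (X i)› i = rayTop (le i) := hi.2.2
            have hUi := hUo i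
            rw [hinst] at hUi
            exact hUi
          obtain ⟨p, r, a, b, h1, h2⟩ := exists_J hi.2.1 hgen (x i) hi.1
          exact ⟨p, r, a, b, fun _ => ⟨h1, h2⟩⟩
        · exact ⟨false, false, x i, x i, fun hc => absurd hc hi⟩
      choose p r a b hpr using hch
      obtain ⟨P, hP⟩ : ∃ P : Bool, {i | p i = P} ∈ D := by
        rcases D.mem_or_compl_mem {i | p i = true} with hm | hm
        · exact ⟨true, hm⟩
        · exact ⟨false, mem_of_superset hm fun i hi => by simpa using hi⟩
      obtain ⟨R, hR⟩ : ∃ R : Bool, {i | r i = R} ∈ D := by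
        rcases D.mem_or_compl_mem {i | r i = true} with hm | hm
        · exact ⟨true, hm⟩
        · exact ⟨false, mem_of_superset hm fun i hi => by simpa using hi⟩
      have hG : {i | x i ∈ U i} ∩ ({i | IsLinearOrder (X i) (le i) ∧
          (inferInstance : TopologicalSpace (X i)) = rayTop (le i)} ∩
          ({i | p i = P} ∩ {i | r i = R})) ∈ D :=
        inter_mem hA (inter_mem h (inter_mem hP hR))
      set A' := Quotient.mk (USetoid D X) a with hA'
      set B' := Quotient.mk (USetoid D X) b with hB'
      refine ⟨Jset (urel D X le) P R A' B', ?_, ?_, ?_⟩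
      · -- T ⊆ ultrabox
        rintro q hq
        obtain ⟨y, rfl⟩ := Quotient.exists_rep q
        refine (mem_ultrabox D U y).2 ?_
        have h1 : {i | p i = true → le i (a i) (y i) ∧ y i ≠ a i} ∈ D := by
          cases P with
          | false =>
            refine mem_of_superset hP fun i hi hpi => absurd (hi ▸ hpi) ?_
            simp
          | true =>
            obtain ⟨hle, hne⟩ := (mem_Jset.1 hq).1 rfl
            rw [hA', urel_mk] at hle
            have hne' : {i | y i = a i}ᶜ ∈ D :=
              Ultrafilter.compl_mem_iff_notMem.2
                (fun hc => hne (hA' ▸ (mk_eq_mk D y a).2 hc))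
            exact mem_of_superset (inter_mem hle hne') fun i hi _ => ⟨hi.1, hi.2⟩
        have h2 : {i | r i = true → le i (y i) (b i) ∧ y i ≠ b i} ∈ D := by
          cases R with
          | false =>
            refine mem_of_superset hR fun i hi hri => absurd (hi ▸ hri) ?_
            simp
          | true =>
            obtain ⟨hle, hne⟩ := (mem_Jset.1 hq).2 rfl
            rw [hB', urel_mk] at hle
            have hne' : {i | y i = b i}ᶜ ∈ D :=
              Ultrafilter.compl_mem_iff_notMem.2
                (fun hc => hne (hB' ▸ (mk_eq_mk D y b).2 hc))
            exact mem_of_superset (inter_mem hle hne') fun i hi _ => ⟨hi.1, hi.2⟩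
        refine mem_of_superset (inter_mem hG (inter_mem h1 h2)) fun i hi => ?_
        exact (hpr i ⟨hi.1.1, hi.1.2.1⟩).2 (mem_Jset.2 ⟨hi.2.1, hi.2.2⟩)
      · -- T open
        have hbl : IsOpen[rayTop (urel D X le)] {q | urel D X le A' q ∧ q ≠ A'} :=
          TopologicalSpace.isOpen_generateFrom_of_mem (Or.inr ⟨A', rfl⟩)
        have hbu : IsOpen[rayTop (urel D X le)] {q | urel D X le q B' ∧ q ≠ B'} :=
          TopologicalSpace.isOpen_generateFrom_of_mem (Or.inl ⟨B', rfl⟩)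
        cases P <;> cases R
        · rw [show Jset (urel D X le) false false A' B' = Set.univ from by
            ext q; simp [Jset]]
          exact isOpen_univ
        · rw [show Jset (urel D X le) false true A' B' =
            {q | urel D X le q B' ∧ q ≠ B'} from by ext q; simp [Jset]]
          exact hbu
        · rw [show Jset (urel D X le) true false A' B' =
            {q | urel D X le A' q ∧ q ≠ A'} from by ext q; simp [Jset]]
          exact hbl
        · rw [show Jset (urel D X le) true true A' B' =
            {q | urel D X le A' q ∧ q ≠ A'} ∩ {q | urel D X le q B' ∧ q ≠ B'} from by
              ext q; simp [Jset]]
          exact hbl.inter hbu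
      · -- x ∈ T
        refine mem_Jset.2 ⟨fun hPt => ?_, fun hRt => ?_⟩
        · subst hPt
          constructor
          · rw [hA', urel_mk]
            refine mem_of_superset hG fun i hi => ?_
            exact ((mem_Jset.1 (hpr i ⟨hi.1, hi.2.1⟩).1).1 hi.2.2.1).1
          · intro hc
            rw [hA'] at hc
            have hcD := (mk_eq_mk D x a).1 hc
            have hne : {i | x i ≠ a i} ∈ D := mem_of_superset hG fun i hi =>
              ((mem_Jset.1 (hpr i ⟨hi.1, hi.2.1⟩).1).1 hi.2.2.1).2
            obtain ⟨i, hi⟩ := Filter.nonempty_of_mem (inter_mem hcD hne)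
            exact hi.2 hi.1
        · subst hRt
          constructor
          · rw [hB', urel_mk]
            refine mem_of_superset hG fun i hi => ?_
            exact ((mem_Jset.1 (hpr i ⟨hi.1, hi.2.1⟩).1).2 hi.2.2.2).1
          · intro hc
            rw [hB'] at hc
            have hcD := (mk_eq_mk D x b).1 hc
            have hne : {i | x i ≠ b i} ∈ D := mem_of_superset hG fun i hi =>
              ((mem_Jset.1 (hpr i ⟨hi.1, hi.2.1⟩).1).2 hi.2.2.2).2
            obtain ⟨i, hi⟩ := Filter.nonempty_of_mem (inter_mem hcD hne)
            exact hi.2 hi.1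
end

section
/- Let A be a normal disjunctive bounded distributive lattice. Then the maximal spectrum S(A), the set of maximal proper filters of A topologized by taking the sets a♯ = {M ∈ S(A) : a ∈ M}, a ∈ A, as a closed base, is a compact Hausdorff space, and the map a ↦ a♯ is a lattice isomorphism from A onto the canonical closed-set base {a♯ : a ∈ A} of S(A). -/
open Set

universe u v

/-- A (lattice) filter: a nonempty, upward-closed subset closed under meets. -/
def IsLatFilter {A : Type u} [DistribLattice A] [BoundedOrder A] (F : Set A) : Prop :=
  F.Nonempty ∧ (∀ a ∈ F, ∀ b : A, a ≤ b → b ∈ F) ∧ ∀ a ∈ F, ∀ b ∈ F, a ⊓ b ∈ F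

/-- A proper filter: a filter omitting `⊥`. -/
def IsProperLatFilter {A : Type u} [DistribLattice A] [BoundedOrder A] (F : Set A) : Prop :=
  IsLatFilter F ∧ (⊥ : A) ∉ F

/-- A prime filter: a proper filter `F` with `a ⊔ b ∈ F → a ∈ F ∨ b ∈ F`. -/
def IsPrimeLatFilter {A : Type u} [DistribLattice A] [BoundedOrder A] (F : Set A) : Prop :=
  IsProperLatFilter F ∧ ∀ a b : A, a ⊔ b ∈ F → a ∈ F ∨ b ∈ F

/-- A maximal filter: a proper filter maximal under inclusion. -/
def IsMaxLatFilter {A : Type u} [DistribLattice A] [BoundedOrder A] (F : Set A) : Prop :=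
  IsProperLatFilter F ∧ ∀ G : Set A, IsProperLatFilter G → F ⊆ G → G = F

/-- A bounded distributive lattice is normal if disjoint elements can be
separated: whenever `a ⊓ b = ⊥` there are `a', b'` with `a ⊓ a' = ⊥`,
`b ⊓ b' = ⊥` and `a' ⊔ b' = ⊤`. -/
def IsNormalLattice (A : Type u) [DistribLattice A] [BoundedOrder A] : Prop :=
  ∀ a b : A, a ⊓ b = ⊥ → ∃ a' b' : A, a ⊓ a' = ⊥ ∧ b ⊓ b' = ⊥ ∧ a' ⊔ b' = ⊤

/-- A bounded distributive lattice is disjunctive if for any two distinct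
elements there is a nonbottom element below one of them and disjoint from the
other. -/
def IsDisjunctiveLattice (A : Type u) [DistribLattice A] [BoundedOrder A] : Prop :=
  ∀ a b : A, a ≠ b → ∃ c : A, c ≠ ⊥ ∧ ((c ≤ a ∧ c ⊓ b = ⊥) ∨ (c ≤ b ∧ c ⊓ a = ⊥))

/-- The maximal spectrum: the set of maximal proper filters of `A`. -/
def MaxSpec (A : Type u) [DistribLattice A] [BoundedOrder A] :=
  {M : Set A // IsMaxLatFilter M}

/-- `a♯ = {M ∈ S(A) : a ∈ M}`. -/
def sharp {A : Type u} [DistribLattice A] [BoundedOrder A] (a : A) : Set (MaxSpec A) :=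
  {M : MaxSpec A | a ∈ M.1}

/-- The spectral topology on `MaxSpec A`, with the sets `a♯` as a closed base. -/
def specTop (A : Type u) [DistribLattice A] [BoundedOrder A] :
    TopologicalSpace (MaxSpec A) :=
  TopologicalSpace.generateFrom {s | ∃ a : A, s = (sharp a)ᶜ}


section WallmanAux
variable {A : Type u} [DistribLattice A] [BoundedOrder A]

lemma top_mem_latFilter {F : Set A} (hF : IsLatFilter F) : (⊤ : A) ∈ F := by
  obtain ⟨⟨x, hx⟩, hup, _⟩ := hF
  exact hup x hx ⊤ le_top

lemma exists_max_ext (F : Set A) (hF : IsProperLatFilter F) :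
    ∃ M : Set A, IsMaxLatFilter M ∧ F ⊆ M := by
  obtain ⟨M, hFM, hmem, hmax⟩ := zorn_subset_nonempty {G : Set A | IsProperLatFilter G}
    (fun c hc hchain hne => by
      refine ⟨⋃₀ c, ⟨⟨⟨⊤, ?_⟩, ?_, ?_⟩, ?_⟩, fun s hs => subset_sUnion_of_mem hs⟩
      · obtain ⟨G, hG⟩ := hne
        exact ⟨G, hG, top_mem_latFilter (hc hG).1⟩
      · rintro a ⟨G, hG, haG⟩ b hab
        exact ⟨G, hG, (hc hG).1.2.1 a haG b hab⟩
      · rintro a ⟨G, hG, haG⟩ b ⟨H, hH, hbH⟩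
        rcases hchain.total hG hH with h | h
        · exact ⟨H, hH, (hc hH).1.2.2 a (h haG) b hbH⟩
        · exact ⟨G, hG, (hc hG).1.2.2 a haG b (h hbH)⟩
      · rintro ⟨G, hG, hbot⟩
        exact (hc hG).2 hbot) F hF
  exact ⟨M, ⟨hmem, fun G hG hMG => (hmax hG hMG).antisymm hMG⟩, hFM⟩

lemma max_compl {M : Set A} (hM : IsMaxLatFilter M) {a : A} (ha : a ∉ M) :
    ∃ m ∈ M, m ⊓ a = ⊥ := by
  by_contra h
  push_neg at h
  set G : Set A := {x | ∃ m ∈ M, m ⊓ a ≤ x} with hGdef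
  have hMG : M ⊆ G := fun m hm => ⟨m, hm, inf_le_left⟩
  have hGfil : IsProperLatFilter G := by
    refine ⟨⟨⟨⊤, hMG (top_mem_latFilter hM.1.1)⟩, ?_, ?_⟩, ?_⟩
    · rintro x ⟨m, hm, hx⟩ y hxy; exact ⟨m, hm, hx.trans hxy⟩
    · rintro x ⟨m, hm, hx⟩ y ⟨n, hn, hy⟩
      refine ⟨m ⊓ n, hM.1.1.2.2 m hm n hn, le_inf ?_ ?_⟩
      · exact le_trans (inf_le_inf_right a inf_le_left) hx
      · exact le_trans (inf_le_inf_right a inf_le_right) hy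
    · rintro ⟨m, hm, hmb⟩
      exact h m hm (le_bot_iff.mp hmb)
  have : G = M := hM.2 G hGfil hMG
  exact ha (this ▸ ⟨⊤, top_mem_latFilter hM.1.1, by simp⟩)

lemma max_prime {M : Set A} (hM : IsMaxLatFilter M) {a b : A}
    (hab : a ⊔ b ∈ M) : a ∈ M ∨ b ∈ M := by
  by_contra h
  push_neg at h
  obtain ⟨m, hm, hma⟩ := max_compl hM h.1
  obtain ⟨n, hn, hnb⟩ := max_compl hM h.2
  have hmem : m ⊓ n ⊓ (a ⊔ b) ∈ M :=
    hM.1.1.2.2 _ (hM.1.1.2.2 m hm n hn) _ hab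
  have : m ⊓ n ⊓ (a ⊔ b) = ⊥ := by
    rw [inf_sup_left]
    have h1 : m ⊓ n ⊓ a = ⊥ := by
      rw [inf_right_comm]; simp [hma]
    have h2 : m ⊓ n ⊓ b = ⊥ := by
      rw [inf_assoc]; simp [hnb]
    rw [h1, h2, bot_sup_eq]
  exact hM.1.2 (this ▸ hmem)

lemma exists_max_mem {c : A} (hc : c ≠ ⊥) : ∃ M : Set A, IsMaxLatFilter M ∧ c ∈ M := by
  have : IsProperLatFilter {x : A | c ≤ x} := by
    refine ⟨⟨⟨c, le_refl c⟩, fun a ha b hab => le_trans ha hab,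
      fun a ha b hb => le_inf ha hb⟩, ?_⟩
    simpa using hc
  obtain ⟨M, hM, hsub⟩ := exists_max_ext _ this
  exact ⟨M, hM, hsub (le_refl c)⟩

lemma sharp_bot' : sharp (⊥ : A) = ∅ := by
  ext M; simp only [sharp, mem_setOf_eq, mem_empty_iff_false, iff_false]
  exact M.2.1.2

lemma sharp_top' : sharp (⊤ : A) = Set.univ := by
  ext M; simp only [sharp, mem_setOf_eq, mem_univ, iff_true]
  exact top_mem_latFilter M.2.1.1

lemma sharp_inf' (a b : A) : sharp (a ⊓ b) = sharp a ∩ sharp b := by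
  ext M
  simp only [sharp, mem_setOf_eq, mem_inter_iff]
  constructor
  · intro h
    exact ⟨M.2.1.1.2.1 _ h a inf_le_left, M.2.1.1.2.1 _ h b inf_le_right⟩
  · rintro ⟨h1, h2⟩
    exact M.2.1.1.2.2 a h1 b h2

lemma sharp_sup' (a b : A) : sharp (a ⊔ b) = sharp a ∪ sharp b := by
  ext M
  simp only [sharp, mem_setOf_eq, mem_union]
  constructor
  · exact fun h => max_prime M.2 h
  · rintro (h | h)
    · exact M.2.1.1.2.1 a h _ le_sup_left
    · exact M.2.1.1.2.1 b h _ le_sup_right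

lemma sharp_injective' (hd : IsDisjunctiveLattice A) :
    Function.Injective (sharp (A := A)) := by
  intro a b hab
  by_contra hne
  obtain ⟨c, hc, hcase⟩ := hd a b hne
  obtain ⟨M, hM, hcM⟩ := exists_max_mem hc
  rcases hcase with ⟨hca, hcb⟩ | ⟨hcb, hca⟩
  · have haM : (⟨M, hM⟩ : MaxSpec A) ∈ sharp a := hM.1.1.2.1 c hcM a hca
    rw [hab] at haM
    exact hM.1.2 (hcb ▸ hM.1.1.2.2 c hcM b haM)
  · have hbM : (⟨M, hM⟩ : MaxSpec A) ∈ sharp b := hM.1.1.2.1 c hcM b hcb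
    rw [← hab] at hbM
    exact hM.1.2 (hca ▸ hM.1.1.2.2 c hcM a hbM)

lemma specBasis :
    letI := specTop A
    TopologicalSpace.IsTopologicalBasis {s : Set (MaxSpec A) | ∃ a : A, s = (sharp a)ᶜ} := by
  letI := specTop A
  refine ⟨?_, ?_, rfl⟩
  · rintro t₁ ⟨a, rfl⟩ t₂ ⟨b, rfl⟩ x hx
    refine ⟨(sharp (a ⊔ b))ᶜ, ⟨a ⊔ b, rfl⟩, ?_, ?_⟩ <;>
      simp_all [sharp_sup', compl_union]
  · apply eq_univ_of_univ_subset
    intro x _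
    exact mem_sUnion.2 ⟨(sharp (⊥ : A))ᶜ, ⟨⊥, rfl⟩, by simp [sharp_bot']⟩

lemma sharp_closed (a : A) :
    letI := specTop A
    IsClosed (sharp a) := by
  letI := specTop A
  rw [← isOpen_compl_iff]
  exact TopologicalSpace.isOpen_generateFrom_of_mem ⟨a, rfl⟩

lemma closed_iff' (s : Set (MaxSpec A)) :
    letI := specTop A
    IsClosed s ↔ ∃ T : Set A, s = ⋂ a ∈ T, sharp a := by
  letI := specTop A
  constructor
  · intro hs
    obtain ⟨S, hS, hsu⟩ := specBasis.open_eq_sUnion hs.isOpen_compl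
    refine ⟨{a : A | (sharp a)ᶜ ∈ S}, ?_⟩
    have : sᶜ = ⋃ a ∈ {a : A | (sharp a)ᶜ ∈ S}, (sharp a)ᶜ := by
      rw [hsu]
      ext x
      simp only [mem_sUnion, mem_iUnion, mem_setOf_eq, mem_compl_iff]
      constructor
      · rintro ⟨t, ht, hxt⟩
        obtain ⟨a, rfl⟩ := hS ht
        exact ⟨a, ht, hxt⟩
      · rintro ⟨a, ha, hxa⟩
        exact ⟨(sharp a)ᶜ, ha, hxa⟩
    have := congrArg compl this
    rw [compl_compl] at this
    rw [this]
    ext x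
    simp
  · rintro ⟨T, rfl⟩
    exact isClosed_biInter fun a _ => sharp_closed a

lemma finset_inf_mem {M : Set A} (hM : IsLatFilter M) (F : Finset A)
    (h : ∀ a ∈ F, a ∈ M) : F.inf id ∈ M := by
  classical
  revert h
  induction F using Finset.cons_induction_on with
  | empty => intro _; simpa using top_mem_latFilter hM
  | cons a s ha ih =>
      intro h
      rw [Finset.inf_cons]
      exact hM.2.2 a (h a (Finset.mem_cons_self a s)) _
        (ih fun b hb => h b (Finset.mem_cons_of_mem hb))

lemma gen_proper (S : Set A) (h : ∀ F : Finset A, ↑F ⊆ S → F.inf id ≠ ⊥) :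
    IsProperLatFilter {x : A | ∃ F : Finset A, ↑F ⊆ S ∧ F.inf id ≤ x} := by
  classical
  refine ⟨⟨⟨⊤, ∅, by simp⟩, ?_, ?_⟩, ?_⟩
  · rintro a ⟨F, hFS, hFa⟩ b hab
    exact ⟨F, hFS, hFa.trans hab⟩
  · rintro a ⟨F, hFS, hFa⟩ b ⟨G, hGS, hGb⟩
    refine ⟨F ∪ G, by simp [Finset.coe_union, union_subset hFS hGS], ?_⟩
    rw [Finset.inf_union]
    exact le_inf (inf_le_left.trans hFa) (inf_le_right.trans hGb)
  · rintro ⟨F, hFS, hF⟩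
    exact h F hFS (le_bot_iff.mp hF)

end WallmanAux

/-- Wallman: for a normal disjunctive bounded distributive lattice `A`, the
maximal spectrum `S(A)` with the sets `a♯` as a closed base is a compact
Hausdorff space, and `a ↦ a♯` is a lattice isomorphism from `A` onto the
canonical closed-set base `{a♯ : a ∈ A}`. -/
theorem maxSpec_compact_hausdorff_and_sharp_iso (A : Type u) [DistribLattice A]
    [BoundedOrder A] (hn : IsNormalLattice A) (hd : IsDisjunctiveLattice A) :
    letI := specTop A
    CompactSpace (MaxSpec A) ∧ T2Space (MaxSpec A) ∧
    (∀ s : Set (MaxSpec A), IsClosed s ↔ ∃ T : Set A, s = ⋂ a ∈ T, sharp a) ∧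
    (∀ a : A, IsClosed (sharp a)) ∧
    Function.Injective (sharp (A := A)) ∧
    sharp (⊥ : A) = ∅ ∧ sharp (⊤ : A) = Set.univ ∧
    (∀ a b : A, sharp (a ⊔ b) = sharp a ∪ sharp b) ∧
    (∀ a b : A, sharp (a ⊓ b) = sharp a ∩ sharp b) := by
  letI := specTop A
  refine ⟨?_, ?_, closed_iff', sharp_closed, sharp_injective' hd, sharp_bot', sharp_top',
    sharp_sup', sharp_inf'⟩
  · -- CompactSpace
    constructor
    apply isCompact_of_finite_subfamily_closed
    intro ι Z hZcl hZ
    classical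
    choose T hT using fun i => (closed_iff' (Z i)).mp (hZcl i)
    set S : Set A := ⋃ i, T i with hSdef
    by_cases hprop : ∀ F : Finset A, ↑F ⊆ S → F.inf id ≠ ⊥
    · exfalso
      obtain ⟨M, hM, hsub⟩ := exists_max_ext _ (gen_proper S hprop)
      have hmem : (⟨M, hM⟩ : MaxSpec A) ∈ (univ : Set (MaxSpec A)) ∩ ⋂ i, Z i := by
        refine ⟨trivial, mem_iInter.2 fun i => ?_⟩
        rw [hT i]
        refine mem_iInter₂.2 fun a ha => ?_
        exact hsub ⟨{a}, by simpa [hSdef] using mem_iUnion.2 ⟨i, ha⟩, by simp⟩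
      rw [hZ] at hmem
      exact hmem
    · push_neg at hprop
      obtain ⟨F, hFS, hFbot⟩ := hprop
      have hex : ∀ a : {x // x ∈ F}, ∃ i, (a : A) ∈ T i := fun a =>
        mem_iUnion.mp (hFS a.2)
      choose f hf using hex
      refine ⟨F.attach.image f, ?_⟩
      rw [eq_empty_iff_forall_notMem]
      rintro M ⟨-, hMi⟩
      have hmem : ∀ a ∈ F, a ∈ M.1 := by
        intro a ha
        have hMZ : M ∈ Z (f ⟨a, ha⟩) :=
          mem_iInter₂.mp hMi (f ⟨a, ha⟩)
            (Finset.mem_image_of_mem f (F.mem_attach ⟨a, ha⟩))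
        rw [hT] at hMZ
        exact mem_iInter₂.mp hMZ a (hf ⟨a, ha⟩)
      exact M.2.1.2 (hFbot ▸ finset_inf_mem M.2.1.1 F hmem)
  · -- T2Space
    have key : ∀ P Q : MaxSpec A, ∀ a : A, a ∈ P.1 → a ∉ Q.1 →
        ∃ u v : Set (MaxSpec A), IsOpen u ∧ IsOpen v ∧ P ∈ u ∧ Q ∈ v ∧ Disjoint u v := by
      intro P Q a haP haQ
      obtain ⟨b, hbQ, hba⟩ := max_compl Q.2 haQ
      obtain ⟨a', b', ha', hb', hsup⟩ := hn a b (by rw [inf_comm]; exact hba)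
      refine ⟨(sharp a')ᶜ, (sharp b')ᶜ,
        TopologicalSpace.isOpen_generateFrom_of_mem ⟨a', rfl⟩,
        TopologicalSpace.isOpen_generateFrom_of_mem ⟨b', rfl⟩, ?_, ?_, ?_⟩
      · intro h
        exact P.2.1.2 (ha' ▸ P.2.1.1.2.2 a haP a' h)
      · intro h
        exact Q.2.1.2 (hb' ▸ Q.2.1.1.2.2 b hbQ b' h)
      · rw [Set.disjoint_iff_inter_eq_empty, ← compl_union, ← sharp_sup', hsup, sharp_top',
          compl_univ]
    constructor
    intro M N hMN
    have hne : M.1 ≠ N.1 := fun h => hMN (Subtype.ext h)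
    have hcases : ¬ (M.1 ⊆ N.1) ∨ ¬ (N.1 ⊆ M.1) := by
      by_contra h
      push_neg at h
      exact hne (h.1.antisymm h.2)
    rcases hcases with h | h
    · obtain ⟨a, haM, haN⟩ := not_subset.mp h
      exact key M N a haM haN
    · obtain ⟨a, haN, haM⟩ := not_subset.mp h
      obtain ⟨u, v, hu, hv, hNu, hMv, hdj⟩ := key N M a haN haM
      exact ⟨v, u, hv, hu, hMv, hNu, hdj.symm⟩
end
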